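/- Let f be a monotone submodular set function on a finite ground set Ω, and let S be the set of size K produced by the greedy algorithm that starts from the empty set and, for K iterations, adds the element e ∈ Ω \ S maximizing the marginal gain Δ(e|S) = f(S ∪ {e}) − f(S). Then f(S) − f(∅) ≥ (1 − 1/e)(f(S*) − f(∅)), where S* is a maximizer of f over all subsets of Ω of cardinality at most K. -/
import Mathlib


open BigOperators

lemma mono_union' {Ω : Type*} [DecidableEq Ω] (f : Finset Ω → ℝ)
    (hmono : ∀ (D : Finset Ω) (z : Ω), f D ≤ f (insert z D)) :
    ∀ (C A : Finset Ω), f A ≤ f (A ∪ C) := by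
  intro C
  induction C using Finset.induction_on with
  | empty => simp
  | @insert b B hb ih =>
    intro A
    calc f A ≤ f (A ∪ B) := ih A
    _ ≤ f (insert b (A ∪ B)) := hmono _ _
    _ = f (A ∪ insert b B) := by rw [Finset.union_insert]

lemma submod_sum' {Ω : Type*} [DecidableEq Ω] (f : Finset Ω → ℝ)
    (hsubmod : ∀ (T D : Finset Ω), T ⊆ D → ∀ z : Ω,
      f (insert z D) - f D ≤ f (insert z T) - f T) :
    ∀ (B A : Finset Ω), f (A ∪ B) ≤ f A + ∑ e ∈ B \ A, (f (insert e A) - f A) := by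
  intro B
  induction B using Finset.induction_on with
  | empty => simp
  | @insert b B hb ih =>
    intro A
    by_cases hbA : b ∈ A
    · have h1 : A ∪ insert b B = A ∪ B := by
        rw [Finset.union_insert, Finset.insert_eq_self.mpr (Finset.mem_union_left _ hbA)]
      have h2 : insert b B \ A = B \ A := Finset.insert_sdiff_of_mem _ hbA
      rw [h1, h2]; exact ih A
    · have h1 : A ∪ insert b B = insert b (A ∪ B) := by rw [Finset.union_insert]
      have h2 : insert b B \ A = insert b (B \ A) := Finset.insert_sdiff_of_notMem _ hbA
      have hbBA : b ∉ B \ A := by simp [hb]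
      rw [h1, h2, Finset.sum_insert hbBA]
      have h3 := hsubmod A (A ∪ B) Finset.subset_union_left b
      have h4 := ih A
      linarith


/-- Nemhauser et al.: the greedy algorithm for maximizing a monotone
submodular set function `f` over a finite ground set `Ω` subject to a cardinality
constraint `K` achieves a `(1 − 1/e)` approximation: if `S 0 = ∅` and at each of the
`K` iterations the element of `Ω \ S k` with maximal marginal gain is inserted, then
`f (S K) − f ∅ ≥ (1 − 1/e) (f S* − f ∅)` for any maximizer `S*` of `f` over subsets
of `Ω` of cardinality at most `K`. -/
theorem greedy_approximation_guarantee {Ω : Type*} [Fintype Ω] [DecidableEq Ω]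
    (f : Finset Ω → ℝ)
    (hmono : ∀ (D : Finset Ω) (z : Ω), f D ≤ f (insert z D))
    (hsubmod : ∀ (T D : Finset Ω), T ⊆ D → ∀ z : Ω,
      f (insert z D) - f D ≤ f (insert z T) - f T)
    (K : ℕ) (S : ℕ → Finset Ω) (hS0 : S 0 = ∅)
    (hgreedy : ∀ k < K, ∃ e ∉ S k, S (k + 1) = insert e (S k) ∧
      ∀ e' ∉ S k, f (insert e' (S k)) - f (S k) ≤ f (insert e (S k)) - f (S k))
    (Sstar : Finset Ω) (hScard : Sstar.card ≤ K)
    (hSopt : ∀ T : Finset Ω, T.card ≤ K → f T ≤ f Sstar) :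
    f (S K) - f ∅ ≥ (1 - 1 / Real.exp 1) * (f Sstar - f ∅) := by
  rcases Nat.eq_zero_or_pos K with hK | hK
  · subst hK
    have : Sstar = ∅ := Finset.card_eq_zero.mp (Nat.le_zero.mp hScard)
    rw [hS0, this]
    simp
  have hK1 : (1 : ℝ) ≤ (K : ℝ) := by exact_mod_cast hK
  have hK0 : (0 : ℝ) < (K : ℝ) := by linarith
  set c : ℝ := 1 - 1 / (K : ℝ) with hc
  have hc0 : 0 ≤ c := by
    have h : 1 / (K : ℝ) ≤ 1 := by
      rw [div_le_one hK0]; exact hK1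
    rw [hc]; linarith
  -- per-step contraction
  have hstep : ∀ k < K, f Sstar - f (S (k + 1)) ≤ c * (f Sstar - f (S k)) := by
    intro k hk
    obtain ⟨e, he, hSk1, hmax⟩ := hgreedy k hk
    set g : ℝ := f (S (k + 1)) - f (S k) with hg
    have hgain : f Sstar - f (S k) ≤ (K : ℝ) * g := by
      have h1 : f Sstar ≤ f (S k ∪ Sstar) := by
        calc f Sstar ≤ f (Sstar ∪ S k) := mono_union' f hmono _ _
        _ = f (S k ∪ Sstar) := by rw [Finset.union_comm]
      have h2 := submod_sum' f hsubmod Sstar (S k)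
      have h3 : ∑ e' ∈ Sstar \ S k, (f (insert e' (S k)) - f (S k)) ≤
          (Sstar \ S k).card • g := by
        apply Finset.sum_le_card_nsmul
        intro x hx
        have hxn : x ∉ S k := (Finset.mem_sdiff.mp hx).2
        rw [hg, hSk1]
        exact hmax x hxn
      have h4 : ((Sstar \ S k).card : ℝ) ≤ (K : ℝ) := by
        exact_mod_cast le_trans (Finset.card_le_card (Finset.sdiff_subset)) hScard
      have hgpos : 0 ≤ g := by
        rw [hg, hSk1]
        have := hmono (S k) e
        linarith
      have h5 : ((Sstar \ S k).card : ℝ) * g ≤ (K : ℝ) * g :=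
        mul_le_mul_of_nonneg_right h4 hgpos
      rw [nsmul_eq_mul] at h3
      linarith
    have hdiv : (f Sstar - f (S k)) / (K : ℝ) ≤ g := by
      rw [div_le_iff₀ hK0]; linarith [hgain]
    have : c * (f Sstar - f (S k)) = (f Sstar - f (S k)) - (f Sstar - f (S k)) / (K : ℝ) := by
      rw [hc]; ring
    rw [this]
    have : f Sstar - f (S (k + 1)) = (f Sstar - f (S k)) - g := by rw [hg]; ring
    linarith
  -- geometric decay
  have hgeo : ∀ k ≤ K, f Sstar - f (S k) ≤ c ^ k * (f Sstar - f (S 0)) := by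
    intro k
    induction k with
    | zero => intro _; simp
    | succ n ih =>
      intro hn
      have hnK : n < K := hn
      have h1 := hstep n hnK
      have h2 := ih (le_of_lt hnK)
      calc f Sstar - f (S (n + 1)) ≤ c * (f Sstar - f (S n)) := h1
      _ ≤ c * (c ^ n * (f Sstar - f (S 0))) := mul_le_mul_of_nonneg_left h2 hc0
      _ = c ^ (n + 1) * (f Sstar - f (S 0)) := by ring
  have hδ0 : 0 ≤ f Sstar - f (S 0) := by
    rw [hS0]
    have := hSopt ∅ (by simp)
    linarith
  have hcK : c ^ K ≤ 1 / Real.exp 1 := by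
    have h1 : c ≤ Real.exp (-(1 / (K : ℝ))) := by
      have := Real.add_one_le_exp (-(1 / (K : ℝ)))
      linarith
    have h2 : c ^ K ≤ Real.exp (-(1 / (K : ℝ))) ^ K := pow_le_pow_left₀ hc0 h1 K
    have h3 : Real.exp (-(1 / (K : ℝ))) ^ K = Real.exp ((K : ℝ) * (-(1 / (K : ℝ)))) := by
      rw [← Real.exp_nat_mul]
    have h4 : (K : ℝ) * (-(1 / (K : ℝ))) = -1 := by
      field_simp
    rw [h3, h4, Real.exp_neg, inv_eq_one_div] at h2
    exact h2
  have hfinal : f Sstar - f (S K) ≤ (1 / Real.exp 1) * (f Sstar - f (S 0)) := by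
    calc f Sstar - f (S K) ≤ c ^ K * (f Sstar - f (S 0)) := hgeo K le_rfl
    _ ≤ (1 / Real.exp 1) * (f Sstar - f (S 0)) := mul_le_mul_of_nonneg_right hcK hδ0
  rw [← hS0]
  linarith
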